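/- Let F(x₁e₁ + x₂e₂) = F₁(x₁)e₁ + F₂(x₂)e₂ on [α, β]_𝕜 and G(x₁e₁ + x₂e₂) = G₁(x₁)e₁ + G₂(x₂)e₂. Then F is hyperbolic Riemann–Stieltjes integrable with respect to G if and only if F₁ is Riemann–Stieltjes integrable with respect to G₁ on [a₁, b₁] and F₂ with respect to G₂ on [a₂, b₂]; in that case ∫_α^β F d_𝕜G = (∫_{a₁}^{b₁} F₁ dG₁)e₁ + (∫_{a₂}^{b₂} F₂ dG₂)e₂. -/

import Mathlib

/-- The hyperbolic partial order on `𝕂 ≅ ℝ × ℝ`. -/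
def hle (x y : ℝ × ℝ) : Prop := x.1 ≤ y.1 ∧ x.2 ≤ y.2

/-- `ρ 0, ρ 1, …, ρ n` is a strong partition of `[α, β]_𝕜`: a `⪯`-chain of
pairwise distinct points starting at `α` and ending at `β`. -/
def IsStrongPartition (ρ : ℕ → ℝ × ℝ) (n : ℕ) (α β : ℝ × ℝ) : Prop :=
  ρ 0 = α ∧ ρ n = β ∧ (∀ j < n, hle (ρ j) (ρ (j + 1))) ∧
    ∀ i ≤ n, ∀ j ≤ n, i ≠ j → ρ i ≠ ρ j

/-- The hyperbolic Riemann–Stieltjes sum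
`∑_j F(γ_j) |G(ρ_{j+1}) - G(ρ_j)|_𝕜` over a tagged strong partition. -/
def hRSSum (F G : ℝ × ℝ → ℝ × ℝ) (n : ℕ) (ρ γ : ℕ → ℝ × ℝ) : ℝ × ℝ :=
  ∑ j ∈ Finset.range n, F (γ j) *
    (|(G (ρ (j + 1))).1 - (G (ρ j)).1|, |(G (ρ (j + 1))).2 - (G (ρ j)).2|)

/-- `𝓘` is the hyperbolic Riemann–Stieltjes integral `∫_α^β F d_𝕜 G`: for
every hyperbolic `ε ≻ 0` there is `δ ≻ 0` such that every strong partition of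
`[α, β]_𝕜` of hyperbolic diameter `≺ δ`, with any choice of tags
`γ_j ∈ [ρ_j, ρ_{j+1}]_𝕜`, has Riemann–Stieltjes sum within `ε` of `𝓘` in
hyperbolic modulus. -/
def HasHRSIntegral (F G : ℝ × ℝ → ℝ × ℝ) (α β 𝓘 : ℝ × ℝ) : Prop :=
  ∀ ε : ℝ × ℝ, 0 < ε.1 → 0 < ε.2 → ∃ δ : ℝ × ℝ, 0 < δ.1 ∧ 0 < δ.2 ∧
    ∀ (n : ℕ) (ρ γ : ℕ → ℝ × ℝ), IsStrongPartition ρ n α β →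
      (∀ j < n, (ρ (j + 1)).1 - (ρ j).1 < δ.1 ∧ (ρ (j + 1)).2 - (ρ j).2 < δ.2) →
      (∀ j < n, hle (ρ j) (γ j) ∧ hle (γ j) (ρ (j + 1))) →
      |(hRSSum F G n ρ γ).1 - 𝓘.1| < ε.1 ∧ |(hRSSum F G n ρ γ).2 - 𝓘.2| < ε.2

/-- `I` is the (componentwise) real Riemann–Stieltjes integral `∫_a^b f d g`
in the sense used for the idempotent components of the hyperbolic one, i.e.
with sums `∑_i f(c_i) |g(p_{i+1}) - g(p_i)|` over tagged partitions. -/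
def HasRealRSIntegral (f g : ℝ → ℝ) (a b I : ℝ) : Prop :=
  ∀ ε > (0 : ℝ), ∃ δ > (0 : ℝ), ∀ (m : ℕ) (p c : ℕ → ℝ),
    p 0 = a → p m = b → (∀ i < m, p i < p (i + 1)) →
    (∀ i < m, p (i + 1) - p i < δ) →
    (∀ i < m, c i ∈ Set.Icc (p i) (p (i + 1))) →
    |∑ i ∈ Finset.range m, f (c i) * |g (p (i + 1)) - g (p i)| - I| < ε

private lemma chain_lt {p : ℕ → ℝ} {m : ℕ} (h : ∀ i < m, p i < p (i + 1)) :
    ∀ i j, i < j → j ≤ m → p i < p j := by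
  intro i j
  induction j with
  | zero => intro h1 _; omega
  | succ j ih =>
    intro hij hjm
    rcases Nat.lt_succ_iff_lt_or_eq.mp hij with h' | h'
    · exact lt_trans (ih h' (by omega)) (h j (by omega))
    · subst h'; exact h i (by omega)

private lemma unifPartition (a b η : ℝ) (hab : a < b) (hη : 0 < η) :
    ∃ (k : ℕ) (p : ℕ → ℝ), 0 < k ∧ p 0 = a ∧ p k = b ∧
      (∀ i : ℕ, p (i + 1) - p i = (b - a) / k) ∧ (b - a) / k < η := by
  obtain ⟨k, hk⟩ := exists_nat_gt (max ((b - a) / η) 0)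
  have hk0 : 0 < k := by
    have := lt_of_le_of_lt (le_max_right ((b - a) / η) 0) hk
    exact_mod_cast this
  have hkb : (b - a) / η < k := lt_of_le_of_lt (le_max_left _ _) hk
  have hkne : (k : ℝ) ≠ 0 := Nat.cast_ne_zero.mpr hk0.ne'
  refine ⟨k, fun i => a + i * ((b - a) / k), hk0, by simp, ?_, ?_, ?_⟩
  · field_simp; ring
  · intro i; push_cast; ring
  · rw [div_lt_iff₀ (by exact_mod_cast hk0)]
    calc b - a = ((b - a) / η) * η := by field_simp
    _ < k * η := mul_lt_mul_of_pos_right hkb hη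
    _ = η * k := mul_comm _ _

private def Tsum (f g : ℝ → ℝ) (p c : ℕ → ℝ) (j : ℕ) : ℝ :=
  f (c j) * |g (p (j + 1)) - g (p j)|

/-- Integrability criterion extends to weakly increasing partitions. -/
private lemma weak_sum (f g : ℝ → ℝ) (a b I ε δ : ℝ)
    (hδ : ∀ (m : ℕ) (p c : ℕ → ℝ), p 0 = a → p m = b → (∀ i < m, p i < p (i + 1)) →
      (∀ i < m, p (i + 1) - p i < δ) → (∀ i < m, c i ∈ Set.Icc (p i) (p (i + 1))) →
      |∑ i ∈ Finset.range m, f (c i) * |g (p (i + 1)) - g (p i)| - I| < ε) :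
    ∀ (m : ℕ) (p c : ℕ → ℝ), p 0 = a → p m = b → (∀ i < m, p i ≤ p (i + 1)) →
      (∀ i < m, p (i + 1) - p i < δ) → (∀ i < m, c i ∈ Set.Icc (p i) (p (i + 1))) →
      |∑ i ∈ Finset.range m, f (c i) * |g (p (i + 1)) - g (p i)| - I| < ε := by
  intro m
  induction m using Nat.strong_induction_on with
  | _ m IH =>
  intro p c hp0 hpm hmono hmesh htag
  by_cases hstrict : ∀ i < m, p i < p (i + 1)
  · exact hδ m p c hp0 hpm hstrict hmesh htag
  · push_neg at hstrict
    obtain ⟨i₀, hi₀m, hi₀⟩ := hstrict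
    have heq : p i₀ = p (i₀ + 1) := le_antisymm (hmono i₀ hi₀m) hi₀
    set p' : ℕ → ℝ := fun j => if j < i₀ then p j else p (j + 1) with hp'def
    set c' : ℕ → ℝ := fun j => if j < i₀ then c j else c (j + 1) with hc'def
    have hp'0 : p' 0 = a := by
      simp only [hp'def]
      by_cases h0 : 0 < i₀
      · rw [if_pos h0]; exact hp0
      · rw [if_neg h0]
        have h5 : i₀ = 0 := by omega
        rw [h5] at heq
        rw [← heq, hp0]
    have hp'm : p' (m - 1) = b := by
      simp only [hp'def]
      rw [if_neg (by omega), show m - 1 + 1 = m from by omega]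
      exact hpm
    have hA : ∀ j < m - 1, p' j ≤ p' (j + 1) ∧ p' (j + 1) - p' j < δ ∧
        c' j ∈ Set.Icc (p' j) (p' (j + 1)) := by
      intro j hj
      by_cases h1 : j + 1 < i₀
      · have h2 : j < i₀ := by omega
        simp only [hp'def, hc'def, if_pos h1, if_pos h2]
        exact ⟨hmono j (by omega), hmesh j (by omega), htag j (by omega)⟩
      · by_cases h2 : j < i₀
        · have h3 : p (j + 1 + 1) = p (j + 1) := by
            have h4 : j + 1 = i₀ := by omega
            rw [h4, ← heq]
          simp only [hp'def, hc'def, if_neg h1, if_pos h2, h3]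
          exact ⟨hmono j (by omega), hmesh j (by omega), htag j (by omega)⟩
        · simp only [hp'def, hc'def, if_neg h1, if_neg h2]
          exact ⟨hmono (j + 1) (by omega), hmesh (j + 1) (by omega), htag (j + 1) (by omega)⟩
    have hT0 : Tsum f g p c i₀ = 0 := by
      simp only [Tsum, ← heq, sub_self, abs_zero, mul_zero]
    have hterm : ∀ j < m - 1, Tsum f g p' c' j =
        if j < i₀ then Tsum f g p c j else Tsum f g p c (j + 1) := by
      intro j hj
      by_cases h1 : j + 1 < i₀
      · have h2 : j < i₀ := by omega
        simp only [Tsum, hp'def, hc'def, if_pos h1, if_pos h2]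
      · by_cases h2 : j < i₀
        · have h3 : p (j + 1 + 1) = p (j + 1) := by
            have h4 : j + 1 = i₀ := by omega
            rw [h4, ← heq]
          simp only [Tsum, hp'def, hc'def, if_neg h1, if_pos h2, h3]
        · simp only [Tsum, hp'def, hc'def, if_neg h1, if_neg h2]
    have key : ∑ i ∈ Finset.range (m - 1), Tsum f g p' c' i
        = ∑ i ∈ Finset.range m, Tsum f g p c i := by
      calc ∑ i ∈ Finset.range (m - 1), Tsum f g p' c' i
          = ∑ j ∈ Finset.range (m - 1),
              (if j < i₀ then Tsum f g p c j else Tsum f g p c (j + 1)) :=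
            Finset.sum_congr rfl (fun j hj => hterm j (Finset.mem_range.mp hj))
        _ = (∑ j ∈ Finset.Ico 0 i₀,
              (if j < i₀ then Tsum f g p c j else Tsum f g p c (j + 1)))
            + ∑ j ∈ Finset.Ico i₀ (m - 1),
              (if j < i₀ then Tsum f g p c j else Tsum f g p c (j + 1)) := by
            rw [Finset.range_eq_Ico,
              ← Finset.sum_Ico_consecutive _ (Nat.zero_le i₀) (by omega : i₀ ≤ m - 1)]
        _ = (∑ j ∈ Finset.Ico 0 i₀, Tsum f g p c j)
            + ∑ j ∈ Finset.Ico i₀ (m - 1), Tsum f g p c (j + 1) := by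
            congr 1
            · exact Finset.sum_congr rfl (fun j hj => if_pos (Finset.mem_Ico.mp hj).2)
            · exact Finset.sum_congr rfl
                (fun j hj => if_neg (by have := (Finset.mem_Ico.mp hj).1; omega))
        _ = (∑ j ∈ Finset.Ico 0 i₀, Tsum f g p c j)
            + ∑ j ∈ Finset.Ico (i₀ + 1) m, Tsum f g p c j := by
            congr 1
            rw [Finset.sum_Ico_eq_sum_range, Finset.sum_Ico_eq_sum_range]
            rw [show m - 1 - i₀ = m - (i₀ + 1) from by omega]
            exact Finset.sum_congr rfl (fun j _ => by congr 1; omega)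
        _ = ∑ i ∈ Finset.range m, Tsum f g p c i := by
            rw [Finset.range_eq_Ico,
              ← Finset.sum_Ico_consecutive _ (Nat.zero_le i₀) (by omega : i₀ ≤ m)]
            congr 1
            rw [Finset.sum_eq_sum_Ico_succ_bot (by omega : i₀ < m), hT0, zero_add]
    have IHres : |∑ i ∈ Finset.range (m - 1), Tsum f g p' c' i - I| < ε :=
      IH (m - 1) (by omega) p' c' hp'0 hp'm (fun j hj => (hA j hj).1)
        (fun j hj => (hA j hj).2.1) (fun j hj => (hA j hj).2.2)
    show |∑ i ∈ Finset.range m, Tsum f g p c i - I| < ε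
    rw [← key]; exact IHres

private lemma toReal1 {a₁ b₁ a₂ b₂ : ℝ} (hb : a₂ < b₂)
    {F₁ F₂ G₁ G₂ : ℝ → ℝ} {F G : ℝ × ℝ → ℝ × ℝ}
    (hF : ∀ ξ : ℝ × ℝ, F ξ = (F₁ ξ.1, F₂ ξ.2))
    (hG : ∀ ξ : ℝ × ℝ, G ξ = (G₁ ξ.1, G₂ ξ.2))
    {𝓘 : ℝ × ℝ} (h : HasHRSIntegral F G (a₁, a₂) (b₁, b₂) 𝓘) :
    HasRealRSIntegral F₁ G₁ a₁ b₁ 𝓘.1 := by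
  intro ε hε
  obtain ⟨δ, hδ1, hδ2, hδ⟩ := h (ε, ε) hε hε
  refine ⟨δ.1, hδ1, ?_⟩
  intro m p c hp0 hpm hstrict hmesh htag
  obtain ⟨k, q, hk, hq0, hqk, hqstep, hqmesh⟩ := unifPartition a₂ b₂ δ.2 hb hδ2
  have hqpos : (0 : ℝ) < (b₂ - a₂) / k :=
    div_pos (by linarith) (by exact_mod_cast hk)
  have hqst : ∀ i < k, q i < q (i + 1) := fun i _ => by
    have := hqstep i; linarith
  have hqchain := chain_lt hqst
  have hpchain := chain_lt hstrict
  set ρ : ℕ → ℝ × ℝ := fun j => if j ≤ m then (p j, a₂) else (b₁, q (j - m)) with hρdef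
  set γ : ℕ → ℝ × ℝ := fun j => if j < m then (c j, a₂) else ρ j with hγdef
  have hρlow : ∀ j, j ≤ m → ρ j = (p j, a₂) := by
    intro j hj; simp only [hρdef]; rw [if_pos hj]
  have hρhigh : ∀ j, m ≤ j → ρ j = (b₁, q (j - m)) := by
    intro j hj
    rcases eq_or_lt_of_le hj with h' | h'
    · subst h'
      simp only [hρdef]; rw [if_pos le_rfl, hpm, Nat.sub_self, hq0]
    · simp only [hρdef]; rw [if_neg (by omega)]
  have hρ0 : ρ 0 = (a₁, a₂) := by rw [hρlow 0 (Nat.zero_le m), hp0]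
  have hρn : ρ (m + k) = (b₁, b₂) := by
    rw [hρhigh (m + k) (Nat.le_add_right m k), show m + k - m = k from by omega, hqk]
  have hstep : ∀ j < m + k, hle (ρ j) (ρ (j + 1)) := by
    intro j hj
    by_cases hjm : j + 1 ≤ m
    · rw [hρlow j (by omega), hρlow (j + 1) hjm]
      exact ⟨le_of_lt (hstrict j (by omega)), le_rfl⟩
    · have hmj : m ≤ j := by omega
      rw [hρhigh j hmj, hρhigh (j + 1) (by omega)]
      refine ⟨le_rfl, ?_⟩
      show q (j - m) ≤ q (j + 1 - m)
      rw [show j + 1 - m = (j - m) + 1 from by omega]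
      have := hqstep (j - m); linarith
  have hdist : ∀ i ≤ m + k, ∀ j ≤ m + k, i ≠ j → ρ i ≠ ρ j := by
    have hs : ∀ i j, i < j → j ≤ m + k → ρ i ≠ ρ j := by
      intro i j hij hjn
      by_cases hjm : j ≤ m
      · rw [hρlow i (by omega), hρlow j hjm]
        intro hc; rw [Prod.mk.injEq] at hc
        exact (ne_of_lt (hpchain i j hij hjm)) hc.1
      · by_cases him : i < m
        · rw [hρlow i (by omega), hρhigh j (by omega)]
          intro hc; rw [Prod.mk.injEq] at hc
          have : p i < b₁ := hpm ▸ hpchain i m him le_rfl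
          exact (ne_of_lt this) hc.1
        · rw [hρhigh i (by omega), hρhigh j (by omega)]
          intro hc; rw [Prod.mk.injEq] at hc
          exact (ne_of_lt (hqchain (i - m) (j - m) (by omega) (by omega))) hc.2
    intro i hi j hj hij
    rcases lt_or_gt_of_ne hij with h' | h'
    · exact hs i j h' hj
    · exact (hs j i h' hi).symm
  have hmeshρ : ∀ j < m + k,
      (ρ (j + 1)).1 - (ρ j).1 < δ.1 ∧ (ρ (j + 1)).2 - (ρ j).2 < δ.2 := by
    intro j hj
    by_cases hjm : j + 1 ≤ m
    · rw [hρlow j (by omega), hρlow (j + 1) hjm]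
      exact ⟨hmesh j (by omega), by simpa using hδ2⟩
    · have hmj : m ≤ j := by omega
      rw [hρhigh j hmj, hρhigh (j + 1) (by omega)]
      refine ⟨by simpa using hδ1, ?_⟩
      show q (j + 1 - m) - q (j - m) < δ.2
      rw [show j + 1 - m = (j - m) + 1 from by omega, hqstep (j - m)]
      exact hqmesh
  have htagρ : ∀ j < m + k, hle (ρ j) (γ j) ∧ hle (γ j) (ρ (j + 1)) := by
    intro j hj
    by_cases hjm : j < m
    · have hcj := htag j hjm
      simp only [hγdef]; rw [if_pos hjm, hρlow j (by omega), hρlow (j + 1) (by omega)]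
      exact ⟨⟨hcj.1, le_rfl⟩, ⟨hcj.2, le_rfl⟩⟩
    · simp only [hγdef]; rw [if_neg hjm]
      exact ⟨⟨le_rfl, le_rfl⟩, hstep j hj⟩
  have hsum : (hRSSum F G (m + k) ρ γ).1
      = ∑ i ∈ Finset.range m, F₁ (c i) * |G₁ (p (i + 1)) - G₁ (p i)| := by
    simp only [hRSSum, Prod.fst_sum]
    rw [Finset.range_eq_Ico,
      ← Finset.sum_Ico_consecutive _ (Nat.zero_le m) (Nat.le_add_right m k)]
    have h2 : ∑ j ∈ Finset.Ico m (m + k), (F (γ j) *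
        (|(G (ρ (j + 1))).1 - (G (ρ j)).1|, |(G (ρ (j + 1))).2 - (G (ρ j)).2|)).1 = 0 := by
      apply Finset.sum_eq_zero
      intro j hj
      have hmj : m ≤ j := (Finset.mem_Ico.mp hj).1
      rw [hρhigh j hmj, hρhigh (j + 1) (by omega)]
      simp [hF, hG, Prod.fst_mul]
    rw [h2, add_zero, ← Finset.range_eq_Ico]
    apply Finset.sum_congr rfl
    intro j hj
    have hjm : j < m := Finset.mem_range.mp hj
    rw [hρlow j (by omega), hρlow (j + 1) (by omega)]
    simp only [hγdef]; rw [if_pos hjm]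
    simp [hF, hG, Prod.fst_mul]
  have H := hδ (m + k) ρ γ ⟨hρ0, hρn, hstep, hdist⟩ hmeshρ htagρ
  rw [hsum] at H
  exact H.1

private lemma toReal2 {a₁ b₁ a₂ b₂ : ℝ} (ha : a₁ < b₁)
    {F₁ F₂ G₁ G₂ : ℝ → ℝ} {F G : ℝ × ℝ → ℝ × ℝ}
    (hF : ∀ ξ : ℝ × ℝ, F ξ = (F₁ ξ.1, F₂ ξ.2))
    (hG : ∀ ξ : ℝ × ℝ, G ξ = (G₁ ξ.1, G₂ ξ.2))
    {𝓘 : ℝ × ℝ} (h : HasHRSIntegral F G (a₁, a₂) (b₁, b₂) 𝓘) :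
    HasRealRSIntegral F₂ G₂ a₂ b₂ 𝓘.2 := by
  intro ε hε
  obtain ⟨δ, hδ1, hδ2, hδ⟩ := h (ε, ε) hε hε
  refine ⟨δ.2, hδ2, ?_⟩
  intro m p c hp0 hpm hstrict hmesh htag
  obtain ⟨k, q, hk, hq0, hqk, hqstep, hqmesh⟩ := unifPartition a₁ b₁ δ.1 ha hδ1
  have hqpos : (0 : ℝ) < (b₁ - a₁) / k :=
    div_pos (by linarith) (by exact_mod_cast hk)
  have hqst : ∀ i < k, q i < q (i + 1) := fun i _ => by
    have := hqstep i; linarith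
  have hqchain := chain_lt hqst
  have hpchain := chain_lt hstrict
  set ρ : ℕ → ℝ × ℝ := fun j => if j ≤ k then (q j, a₂) else (b₁, p (j - k)) with hρdef
  set γ : ℕ → ℝ × ℝ := fun j => if j < k then ρ j else (b₁, c (j - k)) with hγdef
  have hρlow : ∀ j, j ≤ k → ρ j = (q j, a₂) := by
    intro j hj; simp only [hρdef]; rw [if_pos hj]
  have hρhigh : ∀ j, k ≤ j → ρ j = (b₁, p (j - k)) := by
    intro j hj
    rcases eq_or_lt_of_le hj with h' | h'
    · subst h'
      simp only [hρdef]; rw [if_pos le_rfl, hqk, Nat.sub_self, hp0]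
    · simp only [hρdef]; rw [if_neg (by omega)]
  have hρ0 : ρ 0 = (a₁, a₂) := by rw [hρlow 0 (Nat.zero_le k), hq0]
  have hρn : ρ (k + m) = (b₁, b₂) := by
    rw [hρhigh (k + m) (Nat.le_add_right k m), show k + m - k = m from by omega, hpm]
  have hstep : ∀ j < k + m, hle (ρ j) (ρ (j + 1)) := by
    intro j hj
    by_cases hjm : j + 1 ≤ k
    · rw [hρlow j (by omega), hρlow (j + 1) hjm]
      exact ⟨le_of_lt (hqst j (by omega)), le_rfl⟩
    · have hmj : k ≤ j := by omega
      rw [hρhigh j hmj, hρhigh (j + 1) (by omega)]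
      refine ⟨le_rfl, ?_⟩
      show p (j - k) ≤ p (j + 1 - k)
      rw [show j + 1 - k = (j - k) + 1 from by omega]
      exact le_of_lt (hstrict (j - k) (by omega))
  have hdist : ∀ i ≤ k + m, ∀ j ≤ k + m, i ≠ j → ρ i ≠ ρ j := by
    have hs : ∀ i j, i < j → j ≤ k + m → ρ i ≠ ρ j := by
      intro i j hij hjn
      by_cases hjm : j ≤ k
      · rw [hρlow i (by omega), hρlow j hjm]
        intro hc; rw [Prod.mk.injEq] at hc
        exact (ne_of_lt (hqchain i j hij hjm)) hc.1
      · by_cases him : i < k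
        · rw [hρlow i (by omega), hρhigh j (by omega)]
          intro hc; rw [Prod.mk.injEq] at hc
          have : q i < b₁ := hqk ▸ hqchain i k him le_rfl
          exact (ne_of_lt this) hc.1
        · rw [hρhigh i (by omega), hρhigh j (by omega)]
          intro hc; rw [Prod.mk.injEq] at hc
          exact (ne_of_lt (hpchain (i - k) (j - k) (by omega) (by omega))) hc.2
    intro i hi j hj hij
    rcases lt_or_gt_of_ne hij with h' | h'
    · exact hs i j h' hj
    · exact (hs j i h' hi).symm
  have hmeshρ : ∀ j < k + m,
      (ρ (j + 1)).1 - (ρ j).1 < δ.1 ∧ (ρ (j + 1)).2 - (ρ j).2 < δ.2 := by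
    intro j hj
    by_cases hjm : j + 1 ≤ k
    · rw [hρlow j (by omega), hρlow (j + 1) hjm]
      refine ⟨?_, by simpa using hδ2⟩
      show q (j + 1) - q j < δ.1
      rw [hqstep j]; exact hqmesh
    · have hmj : k ≤ j := by omega
      rw [hρhigh j hmj, hρhigh (j + 1) (by omega)]
      refine ⟨by simpa using hδ1, ?_⟩
      show p (j + 1 - k) - p (j - k) < δ.2
      rw [show j + 1 - k = (j - k) + 1 from by omega]
      exact hmesh (j - k) (by omega)
  have htagρ : ∀ j < k + m, hle (ρ j) (γ j) ∧ hle (γ j) (ρ (j + 1)) := by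
    intro j hj
    by_cases hjm : j < k
    · simp only [hγdef]; rw [if_pos hjm]
      exact ⟨⟨le_rfl, le_rfl⟩, hstep j hj⟩
    · have hcj := htag (j - k) (by omega)
      have h1 : j + 1 - k = (j - k) + 1 := by omega
      simp only [hγdef]
      rw [if_neg hjm, hρhigh j (by omega), hρhigh (j + 1) (by omega), h1]
      exact ⟨⟨le_rfl, hcj.1⟩, ⟨le_rfl, hcj.2⟩⟩
  have hsum : (hRSSum F G (k + m) ρ γ).2
      = ∑ i ∈ Finset.range m, F₂ (c i) * |G₂ (p (i + 1)) - G₂ (p i)| := by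
    simp only [hRSSum, Prod.snd_sum]
    rw [Finset.range_eq_Ico,
      ← Finset.sum_Ico_consecutive _ (Nat.zero_le k) (Nat.le_add_right k m)]
    have h2 : ∑ j ∈ Finset.Ico 0 k, (F (γ j) *
        (|(G (ρ (j + 1))).1 - (G (ρ j)).1|, |(G (ρ (j + 1))).2 - (G (ρ j)).2|)).2 = 0 := by
      apply Finset.sum_eq_zero
      intro j hj
      have hjk : j < k := (Finset.mem_Ico.mp hj).2
      rw [hρlow j (by omega), hρlow (j + 1) (by omega)]
      simp [hF, hG, Prod.snd_mul]
    rw [h2, zero_add, Finset.sum_Ico_eq_sum_range,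
      show k + m - k = m from by omega]
    apply Finset.sum_congr rfl
    intro j hj
    have hjm : j < m := Finset.mem_range.mp hj
    rw [hρhigh (k + j) (by omega), hρhigh (k + j + 1) (by omega)]
    simp only [hγdef]
    rw [if_neg (by omega : ¬ k + j < k),
      show k + j - k = j from by omega, show k + j + 1 - k = j + 1 from by omega]
    simp [hF, hG, Prod.snd_mul]
  have H := hδ (k + m) ρ γ ⟨hρ0, hρn, hstep, hdist⟩ hmeshρ htagρ
  rw [hsum] at H
  exact H.2

private lemma real_unique {f g : ℝ → ℝ} {a b I I' : ℝ} (hab : a < b)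
    (h : HasRealRSIntegral f g a b I) (h' : HasRealRSIntegral f g a b I') : I = I' := by
  by_contra hne
  have hsub : I - I' ≠ 0 := sub_ne_zero.mpr hne
  have hε : 0 < |I - I'| / 2 := half_pos (abs_pos.mpr hsub)
  obtain ⟨δ, hδ, H⟩ := h _ hε
  obtain ⟨δ', hδ', H'⟩ := h' _ hε
  obtain ⟨k, p, hk, hp0, hpk, hpstep, hpmesh⟩ :=
    unifPartition a b (min δ δ') hab (lt_min hδ hδ')
  have hqpos : (0 : ℝ) < (b - a) / k := div_pos (by linarith) (by exact_mod_cast hk)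
  have hstrict : ∀ i < k, p i < p (i + 1) := fun i _ => by
    have := hpstep i; linarith
  have hmesh : ∀ i < k, p (i + 1) - p i < δ := fun i _ => by
    rw [hpstep i]; exact lt_of_lt_of_le hpmesh (min_le_left _ _)
  have hmesh' : ∀ i < k, p (i + 1) - p i < δ' := fun i _ => by
    rw [hpstep i]; exact lt_of_lt_of_le hpmesh (min_le_right _ _)
  have htag : ∀ i < k, p i ∈ Set.Icc (p i) (p (i + 1)) := fun i hi =>
    ⟨le_rfl, le_of_lt (hstrict i hi)⟩
  have A := H k p p hp0 hpk hstrict hmesh htag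
  have B := H' k p p hp0 hpk hstrict hmesh' htag
  set S := ∑ i ∈ Finset.range k, f (p i) * |g (p (i + 1)) - g (p i)| with hS
  have tri := abs_sub_le I S I'
  have comm := abs_sub_comm I S
  linarith

/-- For componentwise functions `F = F₁e₁ + F₂e₂` and `G = G₁e₁ + G₂e₂`, `F`
is hyperbolic Riemann–Stieltjes integrable with respect to `G` on `[α, β]_𝕜`
iff `F₁` is integrable w.r.t. `G₁` on `[a₁, b₁]` and `F₂` w.r.t. `G₂` on
`[a₂, b₂]`; in that case `∫_α^β F d_𝕜G = (∫ F₁ dG₁)e₁ + (∫ F₂ dG₂)e₂`. -/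
theorem hRS_integrable_iff (a₁ b₁ a₂ b₂ : ℝ) (ha : a₁ < b₁) (hb : a₂ < b₂)
    (F₁ F₂ G₁ G₂ : ℝ → ℝ) (F G : ℝ × ℝ → ℝ × ℝ)
    (hF : ∀ ξ : ℝ × ℝ, F ξ = (F₁ ξ.1, F₂ ξ.2))
    (hG : ∀ ξ : ℝ × ℝ, G ξ = (G₁ ξ.1, G₂ ξ.2)) :
    ((∃ 𝓘, HasHRSIntegral F G (a₁, a₂) (b₁, b₂) 𝓘) ↔
      (∃ I₁, HasRealRSIntegral F₁ G₁ a₁ b₁ I₁) ∧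
        (∃ I₂, HasRealRSIntegral F₂ G₂ a₂ b₂ I₂)) ∧
    ∀ 𝓘 I₁ I₂, HasHRSIntegral F G (a₁, a₂) (b₁, b₂) 𝓘 →
      HasRealRSIntegral F₁ G₁ a₁ b₁ I₁ → HasRealRSIntegral F₂ G₂ a₂ b₂ I₂ →
      𝓘 = (I₁, I₂) := by
  have fromReal : ∀ I₁ I₂, HasRealRSIntegral F₁ G₁ a₁ b₁ I₁ →
      HasRealRSIntegral F₂ G₂ a₂ b₂ I₂ →
      HasHRSIntegral F G (a₁, a₂) (b₁, b₂) (I₁, I₂) := by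
    intro I₁ I₂ h1 h2 ε hε1 hε2
    obtain ⟨δ₁, hδ₁pos, H1⟩ := h1 ε.1 hε1
    obtain ⟨δ₂, hδ₂pos, H2⟩ := h2 ε.2 hε2
    refine ⟨(δ₁, δ₂), hδ₁pos, hδ₂pos, ?_⟩
    intro n ρ γ hpart hmesh htags
    obtain ⟨hρ0, hρn, hchain, -⟩ := hpart
    constructor
    · have hw := weak_sum F₁ G₁ a₁ b₁ I₁ ε.1 δ₁ H1 n (fun j => (ρ j).1)
        (fun j => (γ j).1) (by show (ρ 0).1 = a₁; rw [hρ0]) (by show (ρ n).1 = b₁; rw [hρn])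
        (fun j hj => (hchain j hj).1) (fun j hj => (hmesh j hj).1)
        (fun j hj => ⟨(htags j hj).1.1, (htags j hj).2.1⟩)
      have hsum : (hRSSum F G n ρ γ).1
          = ∑ i ∈ Finset.range n, F₁ ((γ i).1) * |G₁ ((ρ (i + 1)).1) - G₁ ((ρ i).1)| := by
        simp only [hRSSum, Prod.fst_sum]
        exact Finset.sum_congr rfl fun j _ => by simp [hF, hG, Prod.fst_mul]
      rw [hsum]; exact hw
    · have hw := weak_sum F₂ G₂ a₂ b₂ I₂ ε.2 δ₂ H2 n (fun j => (ρ j).2)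
        (fun j => (γ j).2) (by show (ρ 0).2 = a₂; rw [hρ0]) (by show (ρ n).2 = b₂; rw [hρn])
        (fun j hj => (hchain j hj).2) (fun j hj => (hmesh j hj).2)
        (fun j hj => ⟨(htags j hj).1.2, (htags j hj).2.2⟩)
      have hsum : (hRSSum F G n ρ γ).2
          = ∑ i ∈ Finset.range n, F₂ ((γ i).2) * |G₂ ((ρ (i + 1)).2) - G₂ ((ρ i).2)| := by
        simp only [hRSSum, Prod.snd_sum]
        exact Finset.sum_congr rfl fun j _ => by simp [hF, hG, Prod.snd_mul]
      rw [hsum]; exact hw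
  constructor
  · constructor
    · rintro ⟨𝓘, h𝓘⟩
      exact ⟨⟨𝓘.1, toReal1 hb hF hG h𝓘⟩, ⟨𝓘.2, toReal2 ha hF hG h𝓘⟩⟩
    · rintro ⟨⟨I₁, h1⟩, ⟨I₂, h2⟩⟩
      exact ⟨(I₁, I₂), fromReal I₁ I₂ h1 h2⟩
  · intro 𝓘 I₁ I₂ h𝓘 h1 h2
    have e1 : 𝓘.1 = I₁ := real_unique ha (toReal1 hb hF hG h𝓘) h1
    have e2 : 𝓘.2 = I₂ := real_unique hb (toReal2 ha hF hG h𝓘) h2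
    exact Prod.ext e1 e2
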